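/- Let M, N, r be positive integers, let V₁ ∈ ℂ^{M×N}, let U ∈ ℂ^{M×r} with Uᴴ·U = I_r, let W ∈ ℂ^{N×r} with Wᴴ·W = I_r, and let S ∈ ℂ^{r×r} be a diagonal invertible matrix. Define A := V₁·W·S⁻¹·Uᴴ ∈ ℂ^{M×M} and Ã := Uᴴ·V₁·W·S⁻¹ ∈ ℂ^{r×r}. Suppose λ ∈ ℂ with λ ≠ 0 and w ∈ ℂ^r satisfy Ã·w = λ·w. Then the vector φ := λ⁻¹·V₁·W·S⁻¹·w ∈ ℂ^M satisfies A·φ = λ·φ and Uᴴ·φ = w; in particular, if w ≠ 0 then φ ≠ 0, so every nonzero eigenvalue of Ã is an eigenvalue of A with eigenvector φ. -/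
import Mathlib


open Matrix

/-- For the exact-DMD matrices `A = V₁·W·S⁻¹·Uᴴ` and `Ã = Uᴴ·V₁·W·S⁻¹`, every
eigenpair `(λ, w)` of `Ã` with `λ ≠ 0` yields the eigenvector
`φ = λ⁻¹·V₁·W·S⁻¹·w` of `A` with `A·φ = λ·φ` and `Uᴴ·φ = w`; in particular
`w ≠ 0` implies `φ ≠ 0`. -/
theorem dmd_eigenvector_lift
    (M N r : ℕ) (hM : 0 < M) (hN : 0 < N) (hr : 0 < r)
    (V₁ : Matrix (Fin M) (Fin N) ℂ)
    (U : Matrix (Fin M) (Fin r) ℂ) (hU : Uᴴ * U = 1)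
    (W : Matrix (Fin N) (Fin r) ℂ) (hW : Wᴴ * W = 1)
    (S : Matrix (Fin r) (Fin r) ℂ) (hSdiag : S.IsDiag) (hSinv : IsUnit S.det)
    (A : Matrix (Fin M) (Fin M) ℂ) (hA : A = V₁ * W * S⁻¹ * Uᴴ)
    (Atil : Matrix (Fin r) (Fin r) ℂ) (hAtil : Atil = Uᴴ * V₁ * W * S⁻¹)
    (lam : ℂ) (hlam : lam ≠ 0) (w : Fin r → ℂ) (hw : Atil *ᵥ w = lam • w)
    (φ : Fin M → ℂ) (hφ : φ = lam⁻¹ • ((V₁ * W * S⁻¹) *ᵥ w)) :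
    A *ᵥ φ = lam • φ ∧ Uᴴ *ᵥ φ = w ∧ (w ≠ 0 → φ ≠ 0) := by
  have hAtil' : Atil = Uᴴ * (V₁ * W * S⁻¹) := by
    rw [hAtil, Matrix.mul_assoc, Matrix.mul_assoc, ← Matrix.mul_assoc V₁]
  have hUφ : Uᴴ *ᵥ φ = w := by
    rw [hφ, mulVec_smul, mulVec_mulVec, ← hAtil', hw, smul_smul,
      inv_mul_cancel₀ hlam, one_smul]
  have hlamφ : lam • φ = (V₁ * W * S⁻¹) *ᵥ w := by
    rw [hφ, smul_smul, mul_inv_cancel₀ hlam, one_smul]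
  have hAφ : A *ᵥ φ = lam • φ := by
    rw [hA, ← mulVec_mulVec, hUφ, hlamφ]
  refine ⟨hAφ, hUφ, fun hw0 hφ0 => hw0 ?_⟩
  rw [← hUφ, hφ0, mulVec_zero]
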